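/- Let X be a proper geodesic metric space, D ≥ 0, let γ : [a,b] → X be a D-contracting geodesic, and set δ = 7D + 1 (so that γ is δ-slim). Let σ = γ|[s,t] be a subsegment of γ. Suppose x ∈ X and q ∈ π_{im γ}(x) with q not in the image of σ; write q = γ(c) and let u be the endpoint of σ closest to q (u = γ(s) if c < s, and u = γ(t) if c > t). Then every p ∈ π_{im σ}(x) satisfies dist(p,u) ≤ 2δ. -/

import Mathlib

/-! Geodesics, quasi-geodesics, projections, contracting and super-contracting
geodesics, and Morse geodesics in a metric space. -/

open Metric Set

section Defs

variable {X : Type*} [MetricSpace X]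

/-- `γ` is a geodesic parametrized by `[a,b]`:
`dist (γ s) (γ t) = |s - t|` for all `s, t ∈ [a,b]`. -/
def IsGeodesicOn (γ : ℝ → X) (a b : ℝ) : Prop :=
  ∀ s ∈ Icc a b, ∀ t ∈ Icc a b, dist (γ s) (γ t) = |s - t|

/-- `X` is a geodesic metric space: every two points are joined by a geodesic. -/
def GeodesicSpace (X : Type*) [MetricSpace X] : Prop :=
  ∀ x y : X, ∃ γ : ℝ → X, IsGeodesicOn γ 0 (dist x y) ∧ γ 0 = x ∧ γ (dist x y) = y

/-- `σ` is a `(lam, eps)`-quasi-geodesic parametrized by `[a,b]`. -/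
def IsQuasiGeodesicOn (σ : ℝ → X) (a b lam eps : ℝ) : Prop :=
  ∀ s ∈ Icc a b, ∀ t ∈ Icc a b,
    (1 / lam) * |s - t| - eps ≤ dist (σ s) (σ t) ∧
      dist (σ s) (σ t) ≤ lam * |s - t| + eps

/-- The projection `π_C(x)`: points of `C` realizing `infDist x C`. -/
def projPt (C : Set X) (x : X) : Set X :=
  {p ∈ C | dist x p = infDist x C}

/-- The map `γ` (with parameter interval `[a,b]`) is `D`-contracting: for any
closed ball `B` disjoint from the image of `γ`, the projection `π_{im γ}(B)`
has diameter at most `D`. -/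
def ContractingOn (γ : ℝ → X) (a b D : ℝ) : Prop :=
  ∀ (z : X) (r : ℝ), Disjoint (closedBall z r) (γ '' Icc a b) →
    ∀ x ∈ closedBall z r, ∀ y ∈ closedBall z r,
      ∀ p ∈ projPt (γ '' Icc a b) x, ∀ q ∈ projPt (γ '' Icc a b) y,
        dist p q ≤ D

/-- `γ` (with parameter interval `[a,b]`) is `D`-super-contracting: every
subsegment of `γ` is `D`-contracting. -/
def SuperContractingOn (γ : ℝ → X) (a b D : ℝ) : Prop :=
  ∀ s t : ℝ, a ≤ s → s ≤ t → t ≤ b → ContractingOn γ s t D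

/-- `γ` (with parameter interval `[a,b]`) is `N`-Morse: every
`(lam, eps)`-quasi-geodesic with endpoints on the image of `γ` stays within
distance `N lam eps` of the image of `γ`. -/
def MorseOn (γ : ℝ → X) (a b : ℝ) (N : ℝ → ℝ → ℝ) : Prop :=
  ∀ lam eps : ℝ, 1 ≤ lam → 0 ≤ eps →
    ∀ (σ : ℝ → X) (c d : ℝ), c ≤ d → IsQuasiGeodesicOn σ c d lam eps →
      σ c ∈ γ '' Icc a b → σ d ∈ γ '' Icc a b →
        ∀ s ∈ Icc c d, infDist (σ s) (γ '' Icc a b) ≤ N lam eps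

end Defs


lemma geodesic_continuousOn {X : Type} [MetricSpace X] {γ : ℝ → X} {a b : ℝ}
    (hγ : IsGeodesicOn γ a b) : ContinuousOn γ (Icc a b) := by
  refine Metric.continuousOn_iff.2 fun r hr ε hε => ⟨ε, hε, fun r' hr' hd => ?_⟩
  rw [hγ r' hr' r hr]
  rwa [Real.dist_eq] at hd

lemma cut_subsegment_aux {X : Type} [MetricSpace X]
    (hgeo : GeodesicSpace X) (D : ℝ) (hD : 0 ≤ D)
    (γ : ℝ → X) (a b : ℝ)
    (hγ : IsGeodesicOn γ a b) (hcon : ContractingOn γ a b D)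
    (s t : ℝ) (has : a ≤ s) (hst : s ≤ t) (htb : t ≤ b)
    (x : X) (c : ℝ) (hca : a ≤ c) (hcs : c ≤ s)
    (hq : γ c ∈ projPt (γ '' Set.Icc a b) x) :
    ∀ p ∈ projPt (γ '' Set.Icc s t) x, dist p (γ s) ≤ 2 * (7 * D + 1) := by
  intro p hp
  have hab : a ≤ b := le_trans has (le_trans hst htb)
  obtain ⟨hpmem, hpdist⟩ := hp
  obtain ⟨e, he, rfl⟩ := hpmem
  set p := γ e with hpe
  -- sets
  set A : Set X := γ '' Icc a b with hA
  set A1 : Set X := γ '' Icc a s with hA1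
  set A2 : Set X := γ '' Icc s b with hA2
  set σS : Set X := γ '' Icc s t with hσS
  have hγc : ContinuousOn γ (Icc a b) := geodesic_continuousOn hγ
  have hsub1 : A1 ⊆ A := image_mono (Icc_subset_Icc le_rfl (le_trans hst htb))
  have hsub2 : A2 ⊆ A := image_mono (Icc_subset_Icc has le_rfl)
  have hsubσ2 : σS ⊆ A2 := image_mono (Icc_subset_Icc le_rfl htb)
  have hsubσ : σS ⊆ A := le_trans hsubσ2 hsub2
  have hA1ne : A1.Nonempty := (nonempty_Icc.2 has).image _
  have hA2ne : A2.Nonempty := (nonempty_Icc.2 (le_trans hst htb)).image _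
  have hAne : A.Nonempty := (nonempty_Icc.2 hab).image _
  have hA1c : IsCompact A1 :=
    (isCompact_Icc.image_of_continuousOn (hγc.mono (Icc_subset_Icc le_rfl (le_trans hst htb))))
  have hA2c : IsCompact A2 :=
    (isCompact_Icc.image_of_continuousOn (hγc.mono (Icc_subset_Icc has le_rfl)))
  have hAc : IsCompact A := isCompact_Icc.image_of_continuousOn hγc
  have hσc : IsCompact σS :=
    (isCompact_Icc.image_of_continuousOn (hγc.mono (Icc_subset_Icc has htb)))
  -- geodesic from x to p
  obtain ⟨β, hβ, hβ0, hβd⟩ := hgeo x p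
  set dp : ℝ := dist x p with hdp
  have hdp0 : (0:ℝ) ≤ dp := dist_nonneg
  have hβc : ContinuousOn β (Icc 0 dp) := geodesic_continuousOn hβ
  have hβdist : ∀ r ∈ Icc 0 dp, dist (β r) p = dp - r := by
    intro r hr
    rw [← hβd, hβ r hr dp ⟨hdp0, le_rfl⟩, abs_of_nonpos (by linarith [hr.2])]
    ring
  have hβx : ∀ r ∈ Icc 0 dp, dist x (β r) = r := by
    intro r hr
    rw [← hβ0, hβ 0 ⟨le_rfl, hdp0⟩ r hr, abs_of_nonpos (by linarith [hr.1])]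
    ring
  -- infDist along β to σS
  have hβσ : ∀ r ∈ Icc 0 dp, infDist (β r) σS = dp - r := by
    intro r hr
    refine le_antisymm ?_ ?_
    · calc infDist (β r) σS ≤ dist (β r) p := infDist_le_dist_of_mem ⟨e, he, rfl⟩
        _ = dp - r := hβdist r hr
    · obtain ⟨w, hwσ, hwd⟩ := hσc.exists_infDist_eq_dist ((nonempty_Icc.2 hst).image _) (β r)
      rw [hwd]
      have h1 : dp ≤ dist x w := by
        rw [hpdist]; exact infDist_le_dist_of_mem hwσ
      have h2 : dist x w ≤ dist x (β r) + dist (β r) w := dist_triangle _ _ _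
      rw [hβx r hr] at h2
      linarith
  -- IVT
  set φ : ℝ → ℝ := fun r => infDist (β r) A1 - infDist (β r) A2 with hφ
  have hφc : ContinuousOn φ (Icc 0 dp) :=
    ((continuous_infDist_pt A1).comp_continuousOn hβc).sub
      ((continuous_infDist_pt A2).comp_continuousOn hβc)
  have hφ0 : φ 0 ≤ 0 := by
    have h1 : infDist (β 0) A1 ≤ dist x (γ c) := by
      rw [hβ0]; exact infDist_le_dist_of_mem ⟨c, ⟨hca, hcs⟩, rfl⟩
    have h2 : dist x (γ c) ≤ infDist (β 0) A2 := by
      rw [hβ0, hq.2]; exact infDist_le_infDist_of_subset hsub2 hA2ne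
    simp only [hφ]; linarith
  have hφdp : 0 ≤ φ dp := by
    have h2 : infDist (β dp) A2 = 0 := by
      rw [hβd]; exact infDist_zero_of_mem (hsubσ2 ⟨e, he, rfl⟩)
    simp only [hφ, h2]; linarith [infDist_nonneg (x := β dp) (s := A1)]
  obtain ⟨rz, hrz, hφrz⟩ : ∃ rz ∈ Icc 0 dp, φ rz = 0 := by
    have := intermediate_value_Icc hdp0 hφc
    have h0 : (0:ℝ) ∈ Icc (φ 0) (φ dp) := ⟨hφ0, hφdp⟩
    obtain ⟨rz, hrz, hrz0⟩ := this h0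
    exact ⟨rz, hrz, hrz0⟩
  set z : X := β rz with hz
  -- nearest points
  obtain ⟨pm, hpmA1, hd1⟩ := hA1c.exists_infDist_eq_dist hA1ne z
  obtain ⟨pp, hppA2, hd2⟩ := hA2c.exists_infDist_eq_dist hA2ne z
  obtain ⟨cm, hcm, rfl⟩ := hpmA1
  obtain ⟨ep, hep, rfl⟩ := hppA2
  have heq : infDist z A1 = infDist z A2 := by
    have : φ rz = infDist z A1 - infDist z A2 := rfl
    linarith [hφrz, this ▸ hφrz]
  set d : ℝ := infDist z A2 with hd
  have hd0 : 0 ≤ d := infDist_nonneg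
  have hcmI : cm ∈ Icc a b := ⟨hcm.1, le_trans hcm.2 (le_trans hst htb)⟩
  have hepI : ep ∈ Icc a b := ⟨le_trans has hep.1, hep.2⟩
  -- infDist to A is d
  have hminA : infDist z A = d := by
    refine le_antisymm ?_ ?_
    · rw [hd]; exact infDist_le_infDist_of_subset hsub2 hA2ne
    · obtain ⟨w, hwA, hwd⟩ := hAc.exists_infDist_eq_dist hAne z
      obtain ⟨v, hv, rfl⟩ := hwA
      rw [hwd]
      rcases le_total v s with hvs | hvs
      · calc d = infDist z A1 := heq.symm
          _ ≤ dist z (γ v) := infDist_le_dist_of_mem ⟨v, ⟨hv.1, hvs⟩, rfl⟩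
      · exact hd ▸ infDist_le_dist_of_mem ⟨v, ⟨hvs, hv.2⟩, rfl⟩
  rcases eq_or_lt_of_le hd0 with hd0' | hdpos
  · -- degenerate case: z = γ s = p
    have hzep : dist z (γ ep) = 0 := by rw [← hd2]; exact hd0'.symm
    have hzcm : dist z (γ cm) = 0 := by rw [← hd1, heq]; exact hd0'.symm
    have hcmep : dist (γ cm) (γ ep) = 0 := by
      have := dist_triangle (γ cm) z (γ ep)
      have h0 : (0:ℝ) ≤ dist (γ cm) (γ ep) := dist_nonneg
      rw [dist_comm (γ cm) z] at this
      linarith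
    rw [hγ cm hcmI ep hepI] at hcmep
    have : cm = ep := by
      have := abs_eq_zero.1 hcmep; linarith
    have heps : ep = s := le_antisymm (by rw [← this]; exact hcm.2) hep.1
    have hzs : z = γ s := by
      have := dist_eq_zero.1 hzep; rw [this, heps]
    have hzp : dist z p = 0 := by
      have h1 : dist z p = dp - rz := hβdist rz hrz
      have h2 : infDist z σS = dp - rz := hβσ rz hrz
      have h3 : infDist z σS ≤ dist z (γ s) := infDist_le_dist_of_mem ⟨s, ⟨le_rfl, hst⟩, rfl⟩
      have h4 : dist z (γ s) = 0 := by rw [hzs, dist_self]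
      have h5 : (0:ℝ) ≤ dist z p := dist_nonneg
      linarith
    have hps : p = γ s := by
      have hzp' : z = p := dist_eq_zero.1 hzp
      rw [← hzp', hzs]
    rw [hps, dist_self]
    linarith
  · -- main case
    set ε : ℝ := min d 2 / 2 with hε
    have hε0 : 0 < ε := by positivity
    have hε1 : ε ≤ 1 := by
      rw [hε]; have : min d 2 ≤ 2 := min_le_right _ _; linarith
    have hεd : ε ≤ d / 2 := by
      rw [hε]; have : min d 2 ≤ d := min_le_left _ _; linarith
    have hrad : 0 ≤ d - ε := by linarith
    have hdisj : Disjoint (closedBall z (d - ε)) A := by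
      rw [Set.disjoint_left]
      intro w hw hwA
      have h1 : d ≤ dist z w := hminA ▸ infDist_le_dist_of_mem hwA
      rw [mem_closedBall, dist_comm] at hw
      linarith
    have hzball : z ∈ closedBall z (d - ε) := mem_closedBall_self hrad
    have hpmproj : γ cm ∈ projPt A z := by
      refine ⟨hsub1 ⟨cm, hcm, rfl⟩, ?_⟩
      rw [hminA, ← heq, hd1]
    have hppproj : γ ep ∈ projPt A z := by
      refine ⟨hsub2 ⟨ep, hep, rfl⟩, ?_⟩
      rw [hminA, hd2]
    have h2proj : dist (γ cm) (γ ep) ≤ D :=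
      hcon z (d - ε) hdisj z hzball z hzball (γ cm) hpmproj (γ ep) hppproj
    have heps : ep - s ≤ D := by
      rw [hγ cm hcmI ep hepI] at h2proj
      have h1 : ep - cm ≤ |cm - ep| := by
        rcases abs_cases (cm - ep) with ⟨h, _⟩ | ⟨h, _⟩ <;> linarith
      have := hcm.2
      have := hep.1
      linarith
    rcases le_or_gt ep t with hept | hept
    · -- ep ∈ [s,t]
      have hzdp : dist z p = d := by
        have h1 : dist z p = dp - rz := hβdist rz hrz
        have h2 : infDist z σS = dp - rz := hβσ rz hrz
        have h3 : infDist z σS ≤ dist z (γ ep) := infDist_le_dist_of_mem ⟨ep, ⟨hep.1, hept⟩, rfl⟩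
        have h4 : d ≤ infDist z σS := by
          rw [hd]; exact infDist_le_infDist_of_subset hsubσ2 ((nonempty_Icc.2 hst).image _)
        rw [← hd2] at h3
        linarith
    -- z' on β, ε-close to p
      have hrzdp : dp - rz = d := by rw [← hβdist rz hrz, hzdp]
      set r2 : ℝ := rz + (d - ε) with hr2
      have hr2I : r2 ∈ Icc 0 dp := by
        constructor
        · have := hrz.1; rw [hr2]; linarith
        · rw [hr2]; linarith [hrz.2]
      set z' : X := β r2 with hz'
      have hz'p : dist z' p = ε := by
        rw [hz', hβdist r2 hr2I, hr2]; linarith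
      have hz'ball : z' ∈ closedBall z (d - ε) := by
        rw [mem_closedBall, hz', hz, dist_comm]
        rw [hβ rz hrz r2 hr2I, hr2, abs_of_nonpos (by linarith)]
        simp
      obtain ⟨p', hp'A, hp'd⟩ := hAc.exists_infDist_eq_dist hAne z'
      have hp'proj : p' ∈ projPt A z' := ⟨hp'A, hp'd.symm⟩
      have h2proj' : dist (γ ep) p' ≤ D :=
        hcon z (d - ε) hdisj z hzball z' hz'ball (γ ep) hppproj p' hp'proj
      have hp'p : dist p' p ≤ 2 * ε := by
        have h1 : infDist z' A ≤ dist z' p := infDist_le_dist_of_mem (hsubσ ⟨e, he, rfl⟩)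
        calc dist p' p ≤ dist p' z' + dist z' p := dist_triangle _ _ _
          _ = dist z' p' + dist z' p := by rw [dist_comm]
          _ ≤ dist z' p + dist z' p := by rw [← hp'd]; linarith
          _ = 2 * ε := by rw [hz'p]; ring
      have hepu : dist (γ ep) (γ s) ≤ D := by
        rw [hγ ep hepI s ⟨has, le_trans hst htb⟩, abs_of_nonneg (by linarith [hep.1])]
        linarith
      calc dist p (γ s) ≤ dist p p' + dist p' (γ ep) + dist (γ ep) (γ s) :=
            dist_triangle4 _ _ _ _
        _ ≤ 2 * ε + dist p' (γ ep) + D := by rw [dist_comm p p']; linarith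
        _ ≤ 2 * ε + D + D := by rw [dist_comm p' (γ ep)]; linarith
        _ ≤ 2 * (7 * D + 1) := by linarith
    · -- ep > t : then t - s ≤ D and p between
      have hpu : dist p (γ s) = e - s := by
        rw [hpe, hγ e ⟨le_trans has he.1, le_trans he.2 htb⟩ s ⟨has, le_trans hst htb⟩,
          abs_of_nonneg (by linarith [he.1])]
      rw [hpu]
      have := he.2
      linarith

theorem cut_subsegment_main {X : Type} [MetricSpace X]
    (hgeo : GeodesicSpace X) (D : ℝ) (hD : 0 ≤ D)
    (γ : ℝ → X) (a b : ℝ) (hab : a ≤ b)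
    (hγ : IsGeodesicOn γ a b) (hcon : ContractingOn γ a b D)
    (s t : ℝ) (has : a ≤ s) (hst : s ≤ t) (htb : t ≤ b)
    (x : X) (c : ℝ) (hc : c ∈ Set.Icc a b)
    (hq : γ c ∈ projPt (γ '' Set.Icc a b) x) :
    ∀ p ∈ projPt (γ '' Set.Icc s t) x,
      (c < s → dist p (γ s) ≤ 2 * (7 * D + 1)) ∧
      (t < c → dist p (γ t) ≤ 2 * (7 * D + 1)) := by
  intro p hp
  constructor
  · intro hcs
    exact cut_subsegment_aux hgeo D hD γ a b hγ hcon s t has hst htb x c hc.1 hcs.le hq p hp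
  · intro htc
    -- reflect the parametrization
    set γ' : ℝ → X := fun r => γ (a + b - r) with hγ'def
    have himg : ∀ u v : ℝ, γ' '' Icc u v = γ '' Icc (a + b - v) (a + b - u) := by
      intro u v
      rw [show γ' = γ ∘ (fun r => a + b - r) from rfl, Set.image_comp,
        Set.image_const_sub_Icc]
    have himgab : γ' '' Icc a b = γ '' Icc a b := by
      rw [himg, show a + b - b = a by ring, show a + b - a = b by ring]
    have himgst : γ' '' Icc (a + b - t) (a + b - s) = γ '' Icc s t := by
      rw [himg, show a + b - (a + b - s) = s by ring, show a + b - (a + b - t) = t by ring]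
    have hγ'geo : IsGeodesicOn γ' a b := by
      intro u hu v hv
      have hu' : a + b - u ∈ Icc a b := ⟨by linarith [hu.2], by linarith [hu.1]⟩
      have hv' : a + b - v ∈ Icc a b := ⟨by linarith [hv.2], by linarith [hv.1]⟩
      show dist (γ (a + b - u)) (γ (a + b - v)) = |u - v|
      rw [hγ _ hu' _ hv', show a + b - u - (a + b - v) = v - u by ring, abs_sub_comm]
    have hγ'con : ContractingOn γ' a b D := by
      intro z r hdisj x' hx' y' hy' p1 hp1 q1 hq1
      rw [himgab] at hdisj hp1 hq1
      exact hcon z r hdisj x' hx' y' hy' p1 hp1 q1 hq1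
    have hq' : γ' (a + b - c) ∈ projPt (γ' '' Icc a b) x := by
      rw [himgab]
      show γ (a + b - (a + b - c)) ∈ projPt (γ '' Icc a b) x
      rw [show a + b - (a + b - c) = c by ring]
      exact hq
    have hp' : p ∈ projPt (γ' '' Icc (a + b - t) (a + b - s)) x := by
      rw [himgst]; exact hp
    have key := cut_subsegment_aux hgeo D hD γ' a b hγ'geo hγ'con
      (a + b - t) (a + b - s) (by linarith) (by linarith) (by linarith)
      x (a + b - c) (by linarith [hc.2]) (by linarith) hq' p hp'
    have : γ' (a + b - t) = γ t := by
      show γ (a + b - (a + b - t)) = γ t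
      rw [show a + b - (a + b - t) = t by ring]
    rwa [this] at key

/-- let `γ : [a,b] → X` be a `D`-contracting geodesic,
`δ = 7D + 1`, and `σ = γ|[s,t]` a subsegment. If `x ∈ X` has a projection
point `q = γ c ∈ π_{im γ}(x)` not on `σ`, and `u` is the endpoint of `σ`
closest to `q` (`u = γ s` if `c < s`, `u = γ t` if `c > t`), then every
`p ∈ π_{im σ}(x)` satisfies `dist p u ≤ 2δ`. -/
theorem cut_subsegment {X : Type} [MetricSpace X]
    [ProperSpace X] (hgeo : GeodesicSpace X) (D : ℝ) (hD : 0 ≤ D)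
    (γ : ℝ → X) (a b : ℝ) (hab : a ≤ b)
    (hγ : IsGeodesicOn γ a b) (hcon : ContractingOn γ a b D)
    (s t : ℝ) (has : a ≤ s) (hst : s ≤ t) (htb : t ≤ b)
    (x : X) (c : ℝ) (hc : c ∈ Set.Icc a b)
    (hq : γ c ∈ projPt (γ '' Set.Icc a b) x)
    (hqout : γ c ∉ γ '' Set.Icc s t) :
    ∀ p ∈ projPt (γ '' Set.Icc s t) x,
      (c < s → dist p (γ s) ≤ 2 * (7 * D + 1)) ∧
      (t < c → dist p (γ t) ≤ 2 * (7 * D + 1)) := by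
  exact cut_subsegment_main hgeo D hD γ a b hab hγ hcon s t has hst htb x c hc hq
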